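/- arXiv:0812.2553 — 2 statements merged into one kernel-verified Lean document; each statement's English description precedes it below -/
import Mathlib

section
/- (Theorem 2) Let p ≥ 1 be an odd integer and let s be an even integer with 0 ≤ s < p. Then Σ_{v=0}^{p} C(p,v) C(p−v+1, s) E_v = −C(p,s) E_{p−s}, where E_v denotes the v-th Euler number and C(n,k) the binomial coefficient (with C(n,k) = 0 when k > n). -/
open Finset

/-- The Euler numbers `E_n`, defined by `E_0 = 1` and the recurrence
`∑_{l=0}^{n} C(n,l) E_l + E_n = 0` for `n ≥ 1`. -/
def eulerNumber : ℕ → ℚ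
  | 0 => 1
  | n + 1 => -(∑ l : Fin (n + 1), ((n + 1).choose l : ℚ) * eulerNumber l) / 2

/-- The Euler polynomials `E_n(x) = ∑_{l=0}^{n} C(n,l) E_l x^{n-l}`. -/
noncomputable def eulerPoly (n : ℕ) (x : ℝ) : ℝ :=
  ∑ l ∈ Finset.range (n + 1), (n.choose l : ℝ) * (eulerNumber l : ℝ) * x ^ (n - l)

/-- The Euler function `Ē_p(x) = (-1)^⌊x⌋ E_p(x - ⌊x⌋)`. -/
noncomputable def eulerFun (p : ℕ) (x : ℝ) : ℝ := (-1 : ℝ) ^ ⌊x⌋ * eulerPoly p (x - ⌊x⌋)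

/-- The Dedekind-type DC sum `T_p(h,k) = 2 ∑_{u=1}^{k-1} (-1)^{u-1} (u/k) Ē_p(hu/k)`. -/
noncomputable def dcSum (p h k : ℕ) : ℝ :=
  2 * ∑ u ∈ Finset.Ico 1 k, (-1 : ℝ) ^ (u - 1) * ((u : ℝ) / k) * eulerFun p (h * u / k)

/-- The recurrence in closed form: `∑_{l=0}^{n} C(n,l) E_l = -E_n` for `n ≥ 1`. -/
lemma euler_rec (n : ℕ) (hn : 1 ≤ n) :
    ∑ l ∈ Finset.range (n + 1), ((n.choose l : ℚ)) * eulerNumber l = -eulerNumber n := by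
  obtain ⟨m, rfl⟩ := Nat.exists_eq_add_of_le hn
  rw [add_comm 1 m]
  have hdef : eulerNumber (m + 1)
      = -(∑ l : Fin (m + 1), (((m + 1).choose l : ℚ)) * eulerNumber l) / 2 := by
    rw [eulerNumber]
  rw [Fin.sum_univ_eq_sum_range (fun l => (((m + 1).choose l : ℚ)) * eulerNumber l)] at hdef
  rw [Finset.sum_range_succ]
  have : ∑ l ∈ Finset.range (m + 1), (((m + 1).choose l : ℚ)) * eulerNumber l
      = -2 * eulerNumber (m + 1) := by
    rw [hdef]; ring
  rw [this, Nat.choose_self]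
  push_cast
  ring

/-- The exponential generating function of the Euler numbers. -/
noncomputable def eulerEGF : PowerSeries ℚ := PowerSeries.mk fun n => eulerNumber n / n.factorial

lemma eulerEGF_mul : (PowerSeries.exp ℚ + 1) * eulerEGF = 2 := by
  ext n
  rw [PowerSeries.coeff_mul]
  rw [Finset.Nat.sum_antidiagonal_eq_sum_range_succ_mk]
  have hcoeff : ∀ i, PowerSeries.coeff (R := ℚ) i (PowerSeries.exp ℚ + 1)
      = 1 / i.factorial + (if i = 0 then 1 else 0) := by
    intro i
    rw [map_add, PowerSeries.coeff_exp, PowerSeries.coeff_one]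
    simp
  rcases Nat.eq_zero_or_pos n with rfl | hn
  · simp [hcoeff, eulerEGF, eulerNumber, map_ofNat]
    norm_num
  · have hrhs : (PowerSeries.coeff n) (2 : PowerSeries ℚ) = 0 := by
      rw [(map_ofNat (PowerSeries.C (R := ℚ)) 2).symm, PowerSeries.coeff_C, if_neg (by omega)]
    rw [hrhs]
    simp only [hcoeff, eulerEGF, PowerSeries.coeff_mk]
    have split : ∀ i ∈ Finset.range (n+1),
        (1 / (i.factorial : ℚ) + (if i = 0 then 1 else 0)) * (eulerNumber (n - i) / (n-i).factorial)
        = (1 / (i.factorial : ℚ)) * (eulerNumber (n - i) / (n-i).factorial)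
          + (if i = 0 then eulerNumber n / n.factorial else 0) := by
      intro i hi
      rcases eq_or_ne i 0 with rfl | h
      · rw [if_pos rfl, if_pos rfl, Nat.sub_zero, Nat.factorial_zero, Nat.cast_one]
        ring
      · simp [h]
    rw [Finset.sum_congr rfl split, Finset.sum_add_distrib, Finset.sum_ite_eq' _ 0]
    rw [if_pos (Finset.mem_range.mpr (by omega))]
    have key : ∀ i ∈ Finset.range (n+1),
        (1 / (i.factorial : ℚ)) * (eulerNumber (n - i) / (n-i).factorial)
        = ((n.choose (n - i) : ℚ) * eulerNumber (n - i)) / n.factorial := by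
      intro i hi
      have hi' : i ≤ n := by have := Finset.mem_range.mp hi; omega
      have h1 : (n.choose (n-i)) * (n-i).factorial * (n - (n-i)).factorial = n.factorial :=
        Nat.choose_mul_factorial_mul_factorial (by omega)
      have h2 : n - (n - i) = i := by omega
      rw [h2] at h1
      have h1q : ((n.choose (n-i) : ℚ)) * (n-i).factorial * i.factorial = n.factorial := by
        exact_mod_cast congrArg (Nat.cast : ℕ → ℚ) h1
      have hf1 : ((n-i).factorial : ℚ) ≠ 0 := by exact_mod_cast (n-i).factorial_ne_zero
      have hf2 : (i.factorial : ℚ) ≠ 0 := by exact_mod_cast i.factorial_ne_zero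
      have hf3 : ((n.factorial : ℚ)) ≠ 0 := by exact_mod_cast n.factorial_ne_zero
      have hstep : (1 / (i.factorial:ℚ)) * (eulerNumber (n-i) / (n-i).factorial)
          = eulerNumber (n-i) / (i.factorial * (n-i).factorial) := by ring
      rw [hstep, div_eq_div_iff (by positivity) hf3, ← h1q]
      ring
    rw [Finset.sum_congr rfl key, ← Finset.sum_div]
    have reflect : ∑ i ∈ Finset.range (n+1), ((n.choose (n - i) : ℚ)) * eulerNumber (n - i)
        = ∑ l ∈ Finset.range (n+1), ((n.choose l : ℚ)) * eulerNumber l := by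
      rw [← Finset.sum_range_reflect]
      apply Finset.sum_congr rfl
      intro l hl
      have hl' : l ≤ n := by have := Finset.mem_range.mp hl; omega
      have h2 : n + 1 - 1 - l = n - l := by omega
      have h3 : n - (n - l) = l := by omega
      rw [h2, h3]
    rw [reflect, euler_rec n hn]
    field_simp
    ring

lemma eulerEGF_neg : PowerSeries.rescale (-1 : ℚ) eulerEGF = 2 - eulerEGF := by
  set e' : PowerSeries ℚ := PowerSeries.rescale (-1 : ℚ) (PowerSeries.exp ℚ) with he'
  have hu : (e' + 1) ≠ 0 := by
    intro h
    have := congrArg (PowerSeries.constantCoeff (R := ℚ)) h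
    simp only [map_add, map_one, map_zero, he'] at this
    rw [← PowerSeries.coeff_zero_eq_constantCoeff_apply, PowerSeries.coeff_rescale,
      PowerSeries.coeff_exp] at this
    norm_num at this
  have h1 : (e' + 1) * PowerSeries.rescale (-1 : ℚ) eulerEGF = 2 := by
    have := congrArg (PowerSeries.rescale (-1 : ℚ)) eulerEGF_mul
    rw [map_mul, map_add, map_one, map_ofNat] at this
    exact this
  have hee : PowerSeries.exp ℚ * e' = 1 := PowerSeries.exp_mul_exp_neg_eq_one
  have h2 : (e' + 1) * (2 - eulerEGF) = 2 := by
    have h3 : (e' + 1) * eulerEGF = 2 * e' := by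
      have h4 : e' * ((PowerSeries.exp ℚ + 1) * eulerEGF) = e' * 2 := by rw [eulerEGF_mul]
      calc (e' + 1) * eulerEGF
          = e' * ((PowerSeries.exp ℚ + 1) * eulerEGF)
            - (PowerSeries.exp ℚ * e' - 1) * eulerEGF := by ring
        _ = e' * 2 - 0 * eulerEGF := by rw [h4, hee, sub_self]
        _ = 2 * e' := by ring
    calc (e' + 1) * (2 - eulerEGF) = 2 * (e' + 1) - (e' + 1) * eulerEGF := by ring
      _ = 2 := by rw [h3]; ring
  exact mul_left_cancel₀ hu (h1.trans h2.symm)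

/-- The Euler numbers vanish at positive even indices. -/
lemma euler_even_zero (n : ℕ) (h1 : 1 ≤ n) (h2 : Even n) : eulerNumber n = 0 := by
  have := congrArg (PowerSeries.coeff (R := ℚ) n) eulerEGF_neg
  rw [PowerSeries.coeff_rescale, map_sub, (map_ofNat (PowerSeries.C (R := ℚ)) 2).symm,
    PowerSeries.coeff_C, if_neg (by omega)] at this
  simp only [eulerEGF, PowerSeries.coeff_mk, Even.neg_one_pow h2, one_mul, zero_sub] at this
  have hf : ((n.factorial : ℚ)) ≠ 0 := by exact_mod_cast n.factorial_ne_zero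
  have : eulerNumber n / n.factorial = 0 := by linarith
  field_simp at this
  simpa using this

lemma choose_swap (p v t : ℕ) (hv : v ≤ p) :
    p.choose v * (p - v).choose t = p.choose t * (p - t).choose v := by
  rcases le_or_gt (v + t) p with h | h
  · have h1 : p.choose (p - v) * (p - v).choose t = p.choose t * (p - t).choose (p - v - t) :=
      Nat.choose_mul (by omega)
    rw [Nat.choose_symm hv] at h1
    rw [h1]
    congr 1
    have h5 : p - v - t = (p - t) - v := by omega
    rw [h5, Nat.choose_symm (n := p - t) (k := v) (by omega)]
  · rcases le_or_gt t p with h2 | h2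
    · have e1 : (p - v).choose t = 0 := Nat.choose_eq_zero_of_lt (by omega)
      have e2 : (p - t).choose v = 0 := Nat.choose_eq_zero_of_lt (by omega)
      rw [e1, e2, mul_zero, mul_zero]
    · have e1 : (p - v).choose t = 0 := Nat.choose_eq_zero_of_lt (by omega)
      have e2 : p.choose t = 0 := Nat.choose_eq_zero_of_lt (by omega)
      rw [e1, e2, mul_zero, zero_mul]

lemma sum_choose_euler (p t : ℕ) (ht : t < p) :
    ∑ v ∈ Finset.range (p + 1), (p.choose v : ℚ) * ((p - v).choose t : ℚ) * eulerNumber v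
      = -(p.choose t : ℚ) * eulerNumber (p - t) := by
  have step : ∀ v ∈ Finset.range (p + 1),
      (p.choose v : ℚ) * ((p - v).choose t : ℚ) * eulerNumber v
        = (p.choose t : ℚ) * (((p - t).choose v : ℚ) * eulerNumber v) := by
    intro v hv
    have hv' : v ≤ p := by have := Finset.mem_range.mp hv; omega
    have := choose_swap p v t hv'
    have hq : (p.choose v : ℚ) * ((p - v).choose t : ℚ)
        = (p.choose t : ℚ) * ((p - t).choose v : ℚ) := by exact_mod_cast this
    rw [hq, mul_assoc]
  rw [Finset.sum_congr rfl step, ← Finset.mul_sum]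
  have trunc : ∑ v ∈ Finset.range (p + 1), ((p - t).choose v : ℚ) * eulerNumber v
      = ∑ v ∈ Finset.range (p - t + 1), ((p - t).choose v : ℚ) * eulerNumber v := by
    symm
    apply Finset.sum_subset
    · apply Finset.range_subset_range.mpr; omega
    · intro v hv hv'
      have : p - t < v := by
        have := Finset.mem_range.mp hv
        have h2 : ¬ v < p - t + 1 := fun h => hv' (Finset.mem_range.mpr h)
        omega
      rw [Nat.choose_eq_zero_of_lt this, Nat.cast_zero, zero_mul]
  rw [trunc, euler_rec (p - t) (by omega)]
  ring

/-- Theorem 2: for odd `p ≥ 1` and even `s` with `0 ≤ s < p`,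
`∑_{v=0}^{p} C(p,v) C(p−v+1, s) E_v = −C(p,s) E_{p−s}`. -/
theorem eulerNumber_sum_choose (p s : ℕ) (hp : 1 ≤ p) (hpodd : Odd p)
    (hs : Even s) (hsp : s < p) :
    ∑ v ∈ Finset.range (p + 1),
        (p.choose v : ℚ) * ((p - v + 1).choose s : ℚ) * eulerNumber v =
      -(p.choose s : ℚ) * eulerNumber (p - s) := by
  rcases s with _ | k
  · simp only [Nat.choose_zero_right, Nat.cast_one, mul_one, Nat.sub_zero]
    rw [euler_rec p hp]
    ring
  · have split : ∀ v ∈ Finset.range (p + 1),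
        (p.choose v : ℚ) * ((p - v + 1).choose (k + 1) : ℚ) * eulerNumber v
          = (p.choose v : ℚ) * ((p - v).choose k : ℚ) * eulerNumber v
            + (p.choose v : ℚ) * ((p - v).choose (k + 1) : ℚ) * eulerNumber v := by
      intro v hv
      rw [Nat.choose_succ_succ' (p - v) k]
      push_cast
      ring
    rw [Finset.sum_congr rfl split, Finset.sum_add_distrib,
      sum_choose_euler p k (by omega), sum_choose_euler p (k + 1) (by omega)]
    have hk : Odd k := Nat.Even.sub_odd (by omega) hs odd_one
    have hpk : Even (p - k) := Nat.Odd.sub_odd hpodd hk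
    rw [euler_even_zero (p - k) (by omega) hpk]
    ring
end

section
/- (Theorem 3) For every integer p ≥ 1 and every odd positive integer m, the Dedekind-type DC sum satisfies T_p(1, m) = −Σ_{v=0}^{p} C(p,v) E_v m^{−(p+1−v)} ( E_{p−v+1}(m) + E_{p−v+1} ), where E_v is the v-th Euler number and E_{p−v+1}(x) the (p−v+1)-th Euler polynomial. -/
open Finset

lemma eulerNumber_sum (n : ℕ) (hn : 1 ≤ n) :
    ∑ l ∈ range (n + 1), (n.choose l : ℚ) * eulerNumber l = -eulerNumber n := by
  cases n with
  | zero => omega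
  | succ k =>
    have h : eulerNumber (k + 1)
        = -(∑ l : Fin (k + 1), ((k + 1).choose l : ℚ) * eulerNumber l) / 2 := by
      rw [eulerNumber]
    rw [Fin.sum_univ_eq_sum_range (fun l => ((k + 1).choose l : ℚ) * eulerNumber l)] at h
    have h2 : ∑ l ∈ range (k + 1), ((k + 1).choose l : ℚ) * eulerNumber l
        = -2 * eulerNumber (k + 1) := by
      rw [h]; ring
    rw [Finset.sum_range_succ, h2, Nat.choose_self]
    ring

lemma eulerNumber_sum_real (n : ℕ) (hn : 1 ≤ n) :
    ∑ l ∈ range (n + 1), (n.choose l : ℝ) * (eulerNumber l : ℝ) = -(eulerNumber n : ℝ) := by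
  have := eulerNumber_sum n hn
  have : ((∑ l ∈ range (n + 1), (n.choose l : ℚ) * eulerNumber l : ℚ) : ℝ)
      = ((-eulerNumber n : ℚ) : ℝ) := by rw [this]
  push_cast at this
  exact this

lemma chooseSwap (n l j : ℕ) (hl : l ≤ n) (hj : j ≤ n) :
    n.choose l * (n - l).choose j = n.choose j * (n - j).choose l := by
  rcases le_or_gt (l + j) n with h | h
  · have h1 := Nat.choose_mul (n := n) (k := l + j) (s := l) (Nat.le_add_right _ _)
    have h2 := Nat.choose_mul (n := n) (k := l + j) (s := j) (Nat.le_add_left _ _)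
    simp only [Nat.add_sub_cancel_left, Nat.add_sub_cancel] at h1 h2
    have h3 : (l + j).choose l = (l + j).choose j := by
      have := Nat.choose_symm (n := l + j) (k := j) (Nat.le_add_left _ _)
      simpa using this
    rw [← h1, ← h2, h3]
  · rw [Nat.choose_eq_zero_of_lt (show n - l < j by omega),
      Nat.choose_eq_zero_of_lt (show n - j < l by omega)]
    simp

lemma eulerNumber_sum_real' (N n : ℕ) (hN : 1 ≤ N) (hNn : N ≤ n) :
    ∑ l ∈ range (n + 1), (N.choose l : ℝ) * (eulerNumber l : ℝ) = -(eulerNumber N : ℝ) := by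
  rw [← eulerNumber_sum_real N hN]
  symm
  apply Finset.sum_subset (Finset.range_subset_range.2 (by omega))
  intro l _ hl
  simp only [Finset.mem_range, not_lt] at hl
  rw [Nat.choose_eq_zero_of_lt (by omega)]
  simp

lemma eulerNumber_zero_real : (eulerNumber 0 : ℝ) = 1 := by
  rw [eulerNumber]; norm_num

lemma eulerPoly_add_one (n : ℕ) (x : ℝ) :
    eulerPoly n (x + 1) + eulerPoly n x = 2 * x ^ n := by
  have e1 : eulerPoly n (x + 1) = ∑ l ∈ range (n + 1), ∑ j ∈ range (n + 1),
      (n.choose l : ℝ) * (eulerNumber l : ℝ) * (x ^ j * ((n - l).choose j : ℝ)) := by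
    rw [eulerPoly]
    refine Finset.sum_congr rfl fun l hl => ?_
    simp only [Finset.mem_range] at hl
    rw [add_pow]
    simp only [one_pow, mul_one]
    rw [Finset.mul_sum]
    apply Finset.sum_subset (Finset.range_subset_range.2 (by omega))
    intro j _ hj
    simp only [Finset.mem_range, not_lt] at hj
    rw [Nat.choose_eq_zero_of_lt (show n - l < j by omega)]
    ring
  have e2 : eulerPoly n x = ∑ j ∈ range (n + 1),
      (n.choose j : ℝ) * (eulerNumber (n - j) : ℝ) * x ^ j := by
    rw [eulerPoly, ← Finset.sum_range_reflect]
    refine Finset.sum_congr rfl fun j hj => ?_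
    simp only [Finset.mem_range] at hj
    rw [show n + 1 - 1 - j = n - j by omega, show n - (n - j) = j by omega,
      Nat.choose_symm (by omega)]
  rw [e1, Finset.sum_comm, e2, ← Finset.sum_add_distrib, Finset.sum_range_succ]
  have inner : ∀ j ∈ range n,
      ((∑ l ∈ range (n + 1), (n.choose l : ℝ) * (eulerNumber l : ℝ)
          * (x ^ j * ((n - l).choose j : ℝ)))
        + (n.choose j : ℝ) * (eulerNumber (n - j) : ℝ) * x ^ j) = 0 := by
    intro j hj
    have hj' : j < n := Finset.mem_range.mp hj
    have hs : ∑ l ∈ range (n + 1), (n.choose l : ℝ) * (eulerNumber l : ℝ)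
          * (x ^ j * ((n - l).choose j : ℝ))
        = (n.choose j : ℝ) * x ^ j
          * ∑ l ∈ range (n + 1), ((n - j).choose l : ℝ) * (eulerNumber l : ℝ) := by
      rw [Finset.mul_sum]
      refine Finset.sum_congr rfl fun l hl => ?_
      have hl' : l ≤ n := by simp only [Finset.mem_range] at hl; omega
      have hc := chooseSwap n l j hl' (le_of_lt hj')
      have hc' : (n.choose l : ℝ) * ((n - l).choose j : ℝ)
          = (n.choose j : ℝ) * ((n - j).choose l : ℝ) := by exact_mod_cast hc
      linear_combination (eulerNumber l : ℝ) * x ^ j * hc'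
    rw [hs, eulerNumber_sum_real' (n - j) n (by omega) (by omega)]
    ring
  rw [Finset.sum_eq_zero inner]
  have hlast : ∑ l ∈ range (n + 1), (n.choose l : ℝ) * (eulerNumber l : ℝ)
      * (x ^ n * ((n - l).choose n : ℝ)) = x ^ n := by
    rw [Finset.sum_eq_single_of_mem 0 (Finset.mem_range.mpr (by omega))]
    · simp [eulerNumber_zero_real]
    · intro l hl hl0
      simp only [Finset.mem_range] at hl
      rw [Nat.choose_eq_zero_of_lt (show n - l < n by omega)]
      ring
  rw [hlast, Nat.sub_self, Nat.choose_self, eulerNumber_zero_real]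
  ring

lemma telescope (f : ℕ → ℝ) (m : ℕ) :
    ∑ u ∈ range m, (-1 : ℝ) ^ u * (f (u + 1) + f u) = f 0 - (-1) ^ m * f m := by
  induction m with
  | zero => simp
  | succ k ih => rw [Finset.sum_range_succ, ih, pow_succ]; ring

lemma eulerPoly_zero (n : ℕ) : eulerPoly n 0 = (eulerNumber n : ℝ) := by
  rw [eulerPoly, Finset.sum_range_succ, Nat.sub_self, Nat.choose_self]
  rw [Finset.sum_eq_zero]
  · simp
  · intro l hl
    rw [zero_pow (show n - l ≠ 0 by simp only [Finset.mem_range] at hl; omega)]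
    ring

lemma power_sum (n m : ℕ) (hn : 1 ≤ n) (hmodd : Odd m) :
    2 * ∑ u ∈ Finset.Ico 1 m, (-1 : ℝ) ^ (u - 1) * (u : ℝ) ^ n
      = -((eulerNumber n : ℝ) + eulerPoly n (m : ℝ)) := by
  have hm : 0 < m := hmodd.pos
  have h1 : ∑ u ∈ Finset.Ico 1 m, (-1 : ℝ) ^ (u - 1) * (u : ℝ) ^ n
      = -∑ u ∈ range m, (-1 : ℝ) ^ u * (u : ℝ) ^ n := by
    rw [Finset.range_eq_Ico, Finset.sum_eq_sum_Ico_succ_bot hm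
      (fun u => (-1 : ℝ) ^ u * (u : ℝ) ^ n)]
    rw [Nat.cast_zero, zero_pow (by omega), neg_add, ← Finset.sum_neg_distrib]
    rw [mul_zero, neg_zero, zero_add]
    refine Finset.sum_congr rfl fun u hu => ?_
    rw [Finset.mem_Ico] at hu
    obtain ⟨v, rfl⟩ : ∃ v, u = v + 1 := ⟨u - 1, by omega⟩
    rw [Nat.add_sub_cancel, pow_succ]
    ring
  have h2 : ∑ u ∈ range m, (-1 : ℝ) ^ u * (2 * (u : ℝ) ^ n)
      = ∑ u ∈ range m,
          (-1 : ℝ) ^ u * (eulerPoly n (((u + 1 : ℕ) : ℝ)) + eulerPoly n ((u : ℕ) : ℝ)) := by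
    refine Finset.sum_congr rfl fun u _ => ?_
    have h := eulerPoly_add_one n (u : ℝ)
    push_cast
    rw [h]
  have h3 := telescope (fun k => eulerPoly n ((k : ℕ) : ℝ)) m
  simp only [Nat.cast_zero] at h3
  have h4 : 2 * ∑ u ∈ range m, (-1 : ℝ) ^ u * (u : ℝ) ^ n
      = ∑ u ∈ range m, (-1 : ℝ) ^ u * (2 * (u : ℝ) ^ n) := by
    rw [Finset.mul_sum]
    exact Finset.sum_congr rfl fun _ _ => by ring
  rw [h1, mul_neg, h4, h2, h3, eulerPoly_zero, Odd.neg_one_pow hmodd]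
  ring


/-- Theorem 3: for `p ≥ 1` and odd positive `m`,
`T_p(1, m) = −∑_{v=0}^{p} C(p,v) E_v m^{−(p+1−v)} (E_{p−v+1}(m) + E_{p−v+1})`. -/
theorem dcSum_one (p m : ℕ) (hp : 1 ≤ p) (hm : 0 < m) (hmodd : Odd m) :
    dcSum p 1 m =
      -∑ v ∈ Finset.range (p + 1),
          (p.choose v : ℝ) * (eulerNumber v : ℝ) * ((m : ℝ) ^ (p + 1 - v))⁻¹ *
            (eulerPoly (p - v + 1) (m : ℝ) + (eulerNumber (p - v + 1) : ℝ)) := by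
  have hm' : (m : ℝ) ≠ 0 := Nat.cast_ne_zero.mpr hm.ne'
  have step1 : ∀ u ∈ Finset.Ico 1 m,
      eulerFun p (((1 : ℕ) : ℝ) * u / m) = eulerPoly p ((u : ℝ) / m) := by
    intro u hu
    rw [Finset.mem_Ico] at hu
    have h0 : (0 : ℝ) ≤ (u : ℝ) / m := by positivity
    have h1 : (u : ℝ) / m < 1 := by
      rw [div_lt_one (by exact_mod_cast hm)]
      exact_mod_cast hu.2
    rw [eulerFun, show ((1 : ℕ) : ℝ) * u / m = (u : ℝ) / m by norm_num]
    rw [Int.floor_eq_zero_iff.mpr ⟨h0, h1⟩]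
    simp
  rw [dcSum]
  rw [Finset.sum_congr rfl (fun u hu => by rw [step1 u hu] :
    ∀ u ∈ Finset.Ico 1 m, (-1 : ℝ) ^ (u - 1) * ((u : ℝ) / m) * eulerFun p (((1:ℕ) : ℝ) * u / m)
      = (-1 : ℝ) ^ (u - 1) * ((u : ℝ) / m) * eulerPoly p ((u : ℝ) / m))]
  have expand : ∑ u ∈ Finset.Ico 1 m,
        (-1 : ℝ) ^ (u - 1) * ((u : ℝ) / m) * eulerPoly p ((u : ℝ) / m)
      = ∑ v ∈ range (p + 1), (p.choose v : ℝ) * (eulerNumber v : ℝ) *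
          ((m : ℝ) ^ (p - v + 1))⁻¹ *
          ∑ u ∈ Finset.Ico 1 m, (-1 : ℝ) ^ (u - 1) * (u : ℝ) ^ (p - v + 1) := by
    simp only [eulerPoly, Finset.mul_sum]
    rw [Finset.sum_comm]
    refine Finset.sum_congr rfl fun v hv => ?_
    refine Finset.sum_congr rfl fun u hu => ?_
    rw [div_pow]
    field_simp
    ring
  rw [expand, Finset.mul_sum, ← Finset.sum_neg_distrib]
  refine Finset.sum_congr rfl fun v hv => ?_
  have hv' : v ≤ p := by simp only [Finset.mem_range] at hv; omega
  have hps := power_sum (p - v + 1) m (by omega) hmodd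
  rw [show p + 1 - v = p - v + 1 by omega]
  linear_combination
    ((p.choose v : ℝ) * (eulerNumber v : ℝ) * ((m : ℝ) ^ (p - v + 1))⁻¹) * hps
end
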